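/- Let G be a group acting by homeomorphisms on a compact Hausdorff space Y, let μ be a probability measure on G whose support generates G as a semigroup, let ν be a μ-stationary Borel probability measure on Y with full support, and let φ : Y → ℝ be a continuous function with ∫_G φ(g·y) dμ(g) = φ(y) for all y ∈ Y. Then φ is G-invariant: φ(g·y) = φ(y) for all g ∈ G and y ∈ Y. -/

import Mathlib

open MeasureTheory

/-- A continuous `μ`-harmonic function on a compact `G`-space carrying a `μ`-stationary measure
of full support is `G`-invariant. -/
theorem stmt9 {G Y : Type*} [Group G] [MeasurableSpace G] [MeasurableSingletonClass G]
    [TopologicalSpace Y] [CompactSpace Y] [T2Space Y]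
    [MeasurableSpace Y] [BorelSpace Y]
    [MulAction G Y] [ContinuousConstSMul G Y]
    (μ : Measure G) [IsProbabilityMeasure μ]
    (hadapted : Subsemigroup.closure {g : G | μ {g} ≠ 0} = ⊤)
    (ν : Measure Y) [IsProbabilityMeasure ν]
    (hstat : ∀ f : Y → ℝ, Continuous f →
      ∫ y, (∫ g, f (g • y) ∂μ) ∂ν = ∫ y, f y ∂ν)
    (hsupp : ∀ U : Set Y, IsOpen U → U.Nonempty → 0 < ν U)
    (φ : Y → ℝ) (hφ : Continuous φ)
    (hharm : ∀ y : Y, ∫ g, φ (g • y) ∂μ = φ y) :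
    ∀ (g : G) (y : Y), φ (g • y) = φ y := by
  classical
  set S : Set G := {g : G | μ {g} ≠ 0} with hSdef
  -- S is countable
  have hScount : S.Countable := by
    have hc := MeasureTheory.Measure.countable_meas_pos_of_disjoint_of_meas_iUnion_ne_top
      (μ := μ) (As := fun g : G => {g}) (fun g => measurableSet_singleton g)
      (fun a b hab => by simp [Function.onFun, Set.disjoint_singleton, hab])
      (by simp [measure_ne_top])
    exact hc.mono fun g hg => pos_iff_ne_zero.mpr hg
  -- hence G is countable
  haveI hGcount : Countable G := by
    rw [← Set.countable_univ_iff]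
    haveI : Countable S := hScount.to_subtype
    have hrange : (↑(Submonoid.closure S) : Set G) ⊆
        Set.range (fun l : List S => (l.map (Subtype.val)).prod) := by
      intro x hx
      obtain ⟨l, hl, hprod⟩ := Submonoid.exists_list_of_mem_closure hx
      refine ⟨l.attach.map fun y => (⟨y.1, hl y.1 y.2⟩ : S), ?_⟩
      simp only [List.map_map]
      simpa using hprod
    have hsub : (Set.univ : Set G) ⊆ ↑(Submonoid.closure S) := by
      intro g _
      have hg : g ∈ Subsemigroup.closure S := by
        rw [hadapted]; exact Subsemigroup.mem_top g
      have hle : Subsemigroup.closure S ≤ (Submonoid.closure S).toSubsemigroup :=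
        Subsemigroup.closure_le.mpr Submonoid.subset_closure
      exact hle hg
    exact Set.Countable.mono (hsub.trans hrange) (Set.countable_range _)
  -- trivial case: φ ≡ 0
  by_cases hφ0 : ∀ y : Y, φ y = 0
  · intro g y; rw [hφ0, hφ0]
  push_neg at hφ0
  obtain ⟨y₀, hy₀⟩ := hφ0
  haveI : Nonempty Y := ⟨y₀⟩
  -- a uniform bound for φ
  obtain ⟨ymax, -, hymax⟩ := IsCompact.exists_isMaxOn isCompact_univ
    Set.univ_nonempty (hφ.abs).continuousOn
  set C : ℝ := |φ ymax| with hCdef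
  have hbound : ∀ y : Y, |φ y| ≤ C := fun y => hymax (Set.mem_univ y)
  -- measurability and integrability of g ↦ φ (g • y)
  have hfmeas : ∀ y : Y, Measurable fun g : G => φ (g • y) := fun y =>
    measurable_of_countable _
  have hfint : ∀ y : Y, Integrable (fun g : G => φ (g • y)) μ := fun y =>
    (integrable_const C).mono' (hfmeas y).aestronglyMeasurable
      (Filter.Eventually.of_forall fun g => by simpa using hbound (g • y))
  have hf2int : ∀ y : Y, Integrable (fun g : G => (φ (g • y))^2) μ := fun y =>
    (integrable_const (C^2)).mono' ((hfmeas y).pow_const 2).aestronglyMeasurable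
      (Filter.Eventually.of_forall fun g => by
        rw [Real.norm_eq_abs, abs_pow]
        exact pow_le_pow_left₀ (abs_nonneg _) (hbound (g • y)) 2)
  -- the function h y = ∫ φ(g•y)² dμ and its ν-integral
  set h : Y → ℝ := fun y => ∫ g, (φ (g • y))^2 ∂μ with hhdef
  have hstat2 : ∫ y, h y ∂ν = ∫ y, (φ y)^2 ∂ν := hstat (fun z => (φ z)^2) (hφ.pow 2)
  have hφ2int : Integrable (fun y : Y => (φ y)^2) ν :=
    (hφ.pow 2).integrable_of_hasCompactSupport
      (IsCompact.of_isClosed_subset isCompact_univ (isClosed_tsupport _) (Set.subset_univ _))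
  -- positivity of ∫ φ²
  have hφ2pos : 0 < ∫ y, (φ y)^2 ∂ν := by
    rw [integral_pos_iff_support_of_nonneg (fun y => sq_nonneg _) hφ2int]
    refine hsupp _ ?_ ⟨y₀, ?_⟩
    · exact isOpen_compl_singleton.preimage (hφ.pow 2)
    · simpa [Function.mem_support, pow_eq_zero_iff] using hy₀
  -- h is ν-integrable (otherwise ∫ φ² dν = 0)
  have hint : Integrable h ν := by
    by_contra hni
    rw [integral_undef hni] at hstat2
    exact absurd hstat2.symm (ne_of_gt hφ2pos)
  -- D y := h y - (φ y)² equals the variance integral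
  have hDeq : ∀ y : Y, h y - (φ y)^2 = ∫ g, (φ (g • y) - φ y)^2 ∂μ := by
    intro y
    have i1 : Integrable (fun g : G => (2 * φ y) * φ (g • y)) μ := (hfint y).const_mul _
    have i2 : Integrable (fun g : G => (φ (g • y))^2 - (2 * φ y) * φ (g • y)) μ :=
      (hf2int y).sub i1
    have e : ∫ g, (φ (g • y) - φ y)^2 ∂μ
        = ∫ g, ((φ (g • y))^2 - (2 * φ y) * φ (g • y)) ∂μ + ∫ (_ : G), (φ y)^2 ∂μ := by
      rw [← integral_add i2 (integrable_const _)]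
      apply integral_congr_ae
      filter_upwards with g
      ring
    rw [e, integral_sub (hf2int y) i1, integral_const_mul, hharm y, integral_const, probReal_univ]
    simp [hhdef]
    ring
  -- D vanishes ν-a.e.
  have hD0 : ∀ᵐ y ∂ν, h y - (φ y)^2 = 0 := by
    have hDint : Integrable (fun y => h y - (φ y)^2) ν := hint.sub hφ2int
    have hz : ∫ y, (h y - (φ y)^2) ∂ν = 0 := by
      rw [integral_sub hint hφ2int, hstat2]; ring
    have hnn : ∀ y, 0 ≤ h y - (φ y)^2 := fun y => by
      rw [hDeq y]; exact integral_nonneg fun g => sq_nonneg _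
    have := (integral_eq_zero_iff_of_nonneg hnn hDint).mp hz
    filter_upwards [this] with y hy using hy
  -- the set where D = 0 is dense
  have hAdense : Dense {y : Y | h y - (φ y)^2 = 0} := by
    rw [dense_iff_inter_open]
    intro U hU hUne
    by_contra hempty
    rw [Set.not_nonempty_iff_eq_empty] at hempty
    have hsubU : U ⊆ {y : Y | ¬ (h y - (φ y)^2 = 0)} := by
      intro u hu
      intro hcon
      exact Set.eq_empty_iff_forall_notMem.mp hempty u ⟨hu, hcon⟩
    have : ν U = 0 := le_antisymm ((measure_mono hsubU).trans (le_of_eq (ae_iff.mp hD0)))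
      zero_le
    exact absurd this (ne_of_gt (hsupp U hU hUne))
  -- pointwise identity on the dense set, for atoms
  have key : ∀ g₀ ∈ S, ∀ y ∈ {y : Y | h y - (φ y)^2 = 0}, φ (g₀ • y) = φ y := by
    intro g₀ hg₀ y hy
    have hzero : ∫ g, (φ (g • y) - φ y)^2 ∂μ = 0 := by rw [← hDeq]; exact hy
    have hintg : Integrable (fun g : G => (φ (g • y) - φ y)^2) μ := by
      have heq : (fun g : G => (φ (g • y) - φ y)^2)
          = fun g : G => ((φ (g • y))^2 - (2 * φ y) * φ (g • y)) + (φ y)^2 := by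
        funext g; ring
      rw [heq]
      exact (Integrable.sub (hf2int y) ((hfint y).const_mul _)).add (integrable_const _)
    have hae := (integral_eq_zero_iff_of_nonneg (fun g => sq_nonneg _) hintg).mp hzero
    have hae' : ∀ᵐ g ∂μ, (φ (g • y) - φ y)^2 = 0 := hae
    by_contra hne
    have hsing : {g₀} ⊆ {g : G | ¬ ((φ (g • y) - φ y)^2 = 0)} := by
      intro g hg
      rw [Set.mem_singleton_iff] at hg
      subst hg
      intro hcon
      rw [pow_eq_zero_iff (two_ne_zero), sub_eq_zero] at hcon
      exact hne hcon
    have hmu0 : μ {g₀} = 0 :=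
      le_antisymm ((measure_mono hsing).trans (le_of_eq (ae_iff.mp hae'))) zero_le
    exact hg₀ hmu0
  -- extend to all of Y by continuity
  have key' : ∀ g₀ ∈ S, ∀ y : Y, φ (g₀ • y) = φ y := by
    intro g₀ hg₀
    have hc1 : Continuous fun y : Y => φ (g₀ • y) := hφ.comp (continuous_const_smul g₀)
    have := Continuous.ext_on hAdense hc1 hφ (fun y hy => key g₀ hg₀ y hy)
    exact fun y => congrFun this y
  -- conclude via the subsemigroup generated by S
  let H : Subsemigroup G :=
    { carrier := {g : G | ∀ y : Y, φ (g • y) = φ y}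
      mul_mem' := fun {a b} ha hb y => by rw [mul_smul, ha, hb] }
  have hle : Subsemigroup.closure S ≤ H := Subsemigroup.closure_le.mpr fun g hg => key' g hg
  intro g y
  have hg : g ∈ Subsemigroup.closure S := by rw [hadapted]; exact Subsemigroup.mem_top g
  exact hle hg y
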